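/- Let A ∈ ℂ^{m×n} be nonzero, let q ≥ 1, and let S ∈ ℂ^{q×n} be the random matrix whose q rows are drawn i.i.d. by sampling an index i with probability ‖A_{i,*}‖²/‖A‖_F² and taking the rescaled row (‖A‖_F/(√q·‖A_{i,*}‖))·A_{i,*}. Then E[‖S†S − A†A‖_F²] ≤ ‖A‖_F⁴/q. -/

import Mathlib

open MeasureTheory ProbabilityTheory Finset Matrix

noncomputable def aF {m n : ℕ} (q : ℕ) (A : Matrix (Fin m) (Fin n) ℂ) (i : Fin m) : ℝ :=
  Real.sqrt (∑ i', ∑ j, ‖A i' j‖ ^ 2) / (Real.sqrt q * Real.sqrt (∑ j, ‖A i j‖ ^ 2))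

noncomputable def wF {m n : ℕ} (q : ℕ) (A : Matrix (Fin m) (Fin n) ℂ) (i : Fin m)
    (c c' : Fin n) : ℂ :=
  star ((aF q A i : ℂ) * A i c) * ((aF q A i : ℂ) * A i c')

noncomputable def pF {m n : ℕ} (A : Matrix (Fin m) (Fin n) ℂ) (i : Fin m) : ℝ :=
  (∑ j, ‖A i j‖ ^ 2) / (∑ i', ∑ j, ‖A i' j‖ ^ 2)

section facts
variable {m n : ℕ} (q : ℕ) (A : Matrix (Fin m) (Fin n) ℂ)

lemma F_pos (hA : A ≠ 0) : 0 < ∑ i', ∑ j, ‖A i' j‖ ^ 2 := by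
  rcases (Finset.sum_nonneg (fun i _ => Finset.sum_nonneg (fun j _ =>
      sq_nonneg ‖A i j‖))).lt_or_eq with h | h
  · exact h
  · exfalso; apply hA
    ext i j
    have h1 := (Finset.sum_eq_zero_iff_of_nonneg (fun i _ => Finset.sum_nonneg
      (fun j _ => sq_nonneg ‖A i j‖))).1 h.symm i (mem_univ i)
    have h2 := (Finset.sum_eq_zero_iff_of_nonneg (fun j _ => sq_nonneg ‖A i j‖)).1 h1 j (mem_univ j)
    simpa using h2

lemma row_zero {i : Fin m} (hz : (∑ j, ‖A i j‖ ^ 2) = 0) : ∀ c, A i c = 0 := by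
  intro c
  have h2 := (Finset.sum_eq_zero_iff_of_nonneg (fun j _ => sq_nonneg ‖A i j‖)).1 hz c (mem_univ c)
  simpa using h2

lemma pF_nonneg (i : Fin m) : 0 ≤ pF A i :=
  div_nonneg (Finset.sum_nonneg (fun j _ => sq_nonneg _))
    (Finset.sum_nonneg (fun i _ => Finset.sum_nonneg (fun j _ => sq_nonneg _)))

lemma pF_sum (hA : A ≠ 0) : ∑ i, pF A i = 1 := by
  simp only [pF, ← Finset.sum_div]
  exact div_self (F_pos A hA).ne'

lemma pa_sq (hq : 1 ≤ q) (hA : A ≠ 0) {i : Fin m} (hz : (∑ j, ‖A i j‖ ^ 2) ≠ 0) :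
    pF A i * aF q A i ^ 2 = 1 / q := by
  have hF := F_pos A hA
  have hR : 0 < ∑ j, ‖A i j‖ ^ 2 :=
    (Finset.sum_nonneg (fun j _ => sq_nonneg _)).lt_of_ne (Ne.symm hz)
  have hq0 : (0:ℝ) < q := by exact_mod_cast hq
  have h1 := hF.ne'
  have h2 := hR.ne'
  have h3 := hq0.ne'
  rw [pF, aF, div_pow, mul_pow, Real.sq_sqrt hF.le, Real.sq_sqrt hq0.le, Real.sq_sqrt hR.le]
  field_simp

lemma mean_w (hq : 1 ≤ q) (hA : A ≠ 0) (c c' : Fin n) :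
    ∑ i, (pF A i : ℂ) * wF q A i c c' = (Aᴴ * A) c c' / q := by
  rw [Matrix.mul_apply, Finset.sum_div]
  refine Finset.sum_congr rfl (fun i _ => ?_)
  rw [Matrix.conjTranspose_apply]
  by_cases hz : (∑ j, ‖A i j‖ ^ 2) = 0
  · simp [wF, row_zero A hz]
  · have key := pa_sq q A hq hA hz
    have : wF q A i c c' = ((aF q A i ^ 2 : ℝ) : ℂ) * (star (A i c) * A i c') := by
      simp [wF]; push_cast; ring
    rw [this, ← mul_assoc, ← Complex.ofReal_mul, key]
    push_cast
    have hq0 : (q:ℂ) ≠ 0 := by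
      exact_mod_cast Nat.cast_ne_zero.2 (Nat.one_le_iff_ne_zero.1 hq)
    field_simp

lemma aF_sq (hq : 1 ≤ q) (hA : A ≠ 0) {i : Fin m} (hz : (∑ j, ‖A i j‖ ^ 2) ≠ 0) :
    aF q A i ^ 2 = (∑ i', ∑ j, ‖A i' j‖ ^ 2) / (q * ∑ j, ‖A i j‖ ^ 2) := by
  have hF := F_pos A hA
  have hR : 0 < ∑ j, ‖A i j‖ ^ 2 :=
    (Finset.sum_nonneg (fun j _ => sq_nonneg _)).lt_of_ne (Ne.symm hz)
  have hq0 : (0:ℝ) < q := by exact_mod_cast hq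
  rw [aF, div_pow, mul_pow, Real.sq_sqrt hF.le, Real.sq_sqrt hq0.le, Real.sq_sqrt hR.le]

lemma e_norm (hq : 1 ≤ q) (hA : A ≠ 0) {i : Fin m} (hz : (∑ j, ‖A i j‖ ^ 2) ≠ 0) :
    ∑ c, ‖(aF q A i : ℂ) * A i c‖ ^ 2 = (∑ i', ∑ j, ‖A i' j‖ ^ 2) / q := by
  have hR : 0 < ∑ j, ‖A i j‖ ^ 2 :=
    (Finset.sum_nonneg (fun j _ => sq_nonneg _)).lt_of_ne (Ne.symm hz)
  have hq0 : (0:ℝ) < q := by exact_mod_cast hq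
  have : ∀ c, ‖(aF q A i : ℂ) * A i c‖ ^ 2 = aF q A i ^ 2 * ‖A i c‖ ^ 2 := by
    intro c
    rw [norm_mul, Complex.norm_real, mul_pow, Real.norm_eq_abs, _root_.sq_abs]
  simp_rw [this]
  rw [← Finset.mul_sum, aF_sq q A hq hA hz]
  rw [div_mul_eq_mul_div, mul_comm (↑q : ℝ), ← div_div, mul_div_assoc,
    div_self hz, mul_one]

lemma w_norm (hq : 1 ≤ q) (hA : A ≠ 0) {i : Fin m} (hz : (∑ j, ‖A i j‖ ^ 2) ≠ 0) :
    ∑ c, ∑ c', ‖wF q A i c c'‖ ^ 2 = ((∑ i', ∑ j, ‖A i' j‖ ^ 2) / q) ^ 2 := by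
  have h1 : ∀ c c' : Fin n, ‖wF q A i c c'‖ ^ 2 =
      ‖(aF q A i : ℂ) * A i c‖ ^ 2 * ‖(aF q A i : ℂ) * A i c'‖ ^ 2 := by
    intro c c'
    rw [wF, norm_mul, norm_star, mul_pow]
  simp_rw [h1]
  rw [← Finset.sum_mul_sum, e_norm q A hq hA hz, sq]

lemma sum_prod_eval {q m : ℕ} (c : Fin q → Fin m → ℂ) :
    ∑ v : Fin q → Fin m, ∏ t, c t (v t) = ∏ t, ∑ i, c t i := by
  rw [Finset.prod_univ_sum, Fintype.piFinset_univ]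

lemma key_diag {q m : ℕ} (p : Fin m → ℂ) (hp : ∑ i, p i = 1) (φ : Fin m → ℂ) (r : Fin q) :
    ∑ v : Fin q → Fin m, (∏ t, p (v t)) * φ (v r) = ∑ i, p i * φ i := by
  have h1 : ∀ v : Fin q → Fin m,
      (∏ t, p (v t)) * φ (v r) = ∏ t, (p (v t) * if t = r then φ (v t) else 1) := by
    intro v
    rw [Finset.prod_mul_distrib, Fintype.prod_ite_eq' r (fun t => φ (v t))]
  simp_rw [h1]
  rw [sum_prod_eval (fun t i => p i * if t = r then φ i else 1)]
  have h2 : ∀ t : Fin q, (∑ i, p i * if t = r then φ i else 1)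
      = if t = r then ∑ i, p i * φ i else 1 := by
    intro t; split <;> simp [hp]
  simp_rw [h2]
  rw [Fintype.prod_ite_eq' r (fun _ => ∑ i, p i * φ i)]

lemma key_pair {q m : ℕ} (p : Fin m → ℂ) (hp : ∑ i, p i = 1) (φ ψ : Fin m → ℂ)
    {r s : Fin q} (hrs : r ≠ s) :
    ∑ v : Fin q → Fin m, (∏ t, p (v t)) * (φ (v r) * ψ (v s)) =
      (∑ i, p i * φ i) * (∑ i, p i * ψ i) := by
  have h1 : ∀ v : Fin q → Fin m,
      (∏ t, p (v t)) * (φ (v r) * ψ (v s)) =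
        ∏ t, (p (v t) * ((if t = r then φ (v t) else 1) * (if t = s then ψ (v t) else 1))) := by
    intro v
    rw [Finset.prod_mul_distrib, Finset.prod_mul_distrib,
      Fintype.prod_ite_eq' r (fun t => φ (v t)), Fintype.prod_ite_eq' s (fun t => ψ (v t))]
  simp_rw [h1]
  rw [sum_prod_eval (fun t i => p i * ((if t = r then φ i else 1) * (if t = s then ψ i else 1)))]
  have h2 : ∀ t : Fin q, (∑ i, p i * ((if t = r then φ i else 1) * (if t = s then ψ i else 1)))
      = (if t = r then ∑ i, p i * φ i else 1) * (if t = s then ∑ i, p i * ψ i else 1) := by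
    intro t
    rcases eq_or_ne t r with h | h
    · subst h; simp [hrs]
    · rcases eq_or_ne t s with h' | h'
      · subst h'; simp [h]
      · simp [h, h', hp]
  simp_rw [h2]
  rw [Finset.prod_mul_distrib, Fintype.prod_ite_eq' r (fun _ => ∑ i, p i * φ i),
    Fintype.prod_ite_eq' s (fun _ => ∑ i, p i * ψ i)]

lemma det_bound {m n : ℕ} (q : ℕ) (hq : 1 ≤ q) (A : Matrix (Fin m) (Fin n) ℂ) (hA : A ≠ 0) :
    ∑ v : Fin q → Fin m, (∏ t, pF A (v t)) *
      (∑ c, ∑ c', ‖(∑ r, wF q A (v r) c c') - (Aᴴ * A) c c'‖ ^ 2) ≤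
      (∑ i', ∑ j, ‖A i' j‖ ^ 2) ^ 2 / q := by
  have hF := F_pos A hA
  have hq0 : (0:ℝ) < q := by exact_mod_cast hq
  have hqC : (q:ℂ) ≠ 0 := by exact_mod_cast hq0.ne'
  have hpC : ∑ i, (pF A i : ℂ) = 1 := by exact_mod_cast pF_sum A hA
  set G : Fin n → Fin n → Fin m → ℂ :=
    fun c c' i => wF q A i c c' - (Aᴴ * A) c c' / q with hGdef
  have hmean0 : ∀ c c', ∑ i, (pF A i : ℂ) * G c c' i = 0 := by
    intro c c'
    simp only [hGdef, mul_sub]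
    rw [Finset.sum_sub_distrib, mean_w q A hq hA, ← Finset.sum_mul, hpC, one_mul, sub_self]
  -- main per-entry bound
  have main : ∀ c c', ∑ v : Fin q → Fin m, (∏ t, pF A (v t)) *
      ‖(∑ r, wF q A (v r) c c') - (Aᴴ * A) c c'‖ ^ 2
      ≤ (q : ℝ) * ∑ i, pF A i * ‖wF q A i c c'‖ ^ 2 := by
    intro c c'
    have step0 : ∀ v : Fin q → Fin m,
        (∑ r, wF q A (v r) c c') - (Aᴴ * A) c c' = ∑ r, G c c' (v r) := by
      intro v
      simp only [hGdef, Finset.sum_sub_distrib, Finset.sum_const, card_univ,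
        Fintype.card_fin, nsmul_eq_mul]
      rw [mul_div_cancel₀ _ hqC]
    have claim1 : ∑ v : Fin q → Fin m, (∏ t, pF A (v t)) * ‖∑ r, G c c' (v r)‖ ^ 2 =
        (∑ v : Fin q → Fin m, (∏ t, (pF A (v t) : ℂ)) *
          ((∑ r, G c c' (v r)) * (starRingEnd ℂ) (∑ r, G c c' (v r)))).re := by
      rw [Complex.re_sum]
      refine Finset.sum_congr rfl fun v _ => ?_
      rw [Complex.mul_conj,
        show ∏ t, (pF A (v t) : ℂ) = ((∏ t, pF A (v t) : ℝ) : ℂ) by push_cast; rfl,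
        ← Complex.ofReal_mul, Complex.ofReal_re, Complex.normSq_eq_norm_sq]
    have claim2 : (∑ v : Fin q → Fin m, (∏ t, (pF A (v t) : ℂ)) *
          ((∑ r, G c c' (v r)) * (starRingEnd ℂ) (∑ r, G c c' (v r)))) =
        (q : ℂ) * ∑ i, (pF A i : ℂ) * (G c c' i * (starRingEnd ℂ) (G c c' i)) := by
      have expand : ∀ v : Fin q → Fin m,
          (∏ t, (pF A (v t) : ℂ)) *
            ((∑ r, G c c' (v r)) * (starRingEnd ℂ) (∑ r, G c c' (v r))) =
          ∑ r, ∑ s, (∏ t, (pF A (v t) : ℂ)) *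
            (G c c' (v r) * (starRingEnd ℂ) (G c c' (v s))) := by
        intro v
        rw [map_sum, Finset.sum_mul_sum]
        rw [Finset.mul_sum]
        exact Finset.sum_congr rfl fun r _ => Finset.mul_sum _ _ _
      simp_rw [expand]
      rw [Finset.sum_comm]
      have inner : ∀ r : Fin q, ∑ v : Fin q → Fin m, ∑ s, (∏ t, (pF A (v t) : ℂ)) *
          (G c c' (v r) * (starRingEnd ℂ) (G c c' (v s))) =
          ∑ s : Fin q, if r = s then ∑ i, (pF A i : ℂ) *
            (G c c' i * (starRingEnd ℂ) (G c c' i)) else 0 := by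
        intro r
        rw [Finset.sum_comm]
        refine Finset.sum_congr rfl fun s _ => ?_
        rcases eq_or_ne r s with h | h
        · subst h
          rw [if_pos rfl]
          exact key_diag _ hpC (fun i => G c c' i * (starRingEnd ℂ) (G c c' i)) r
        · rw [if_neg h, key_pair _ hpC (G c c') (fun i => (starRingEnd ℂ) (G c c' i)) h,
            hmean0 c c', zero_mul]
      simp_rw [inner]
      simp [Finset.sum_ite_eq, mul_comm]
    have claim3 : (∑ i, (pF A i : ℂ) * (G c c' i * (starRingEnd ℂ) (G c c' i))).re ≤
        ∑ i, pF A i * ‖wF q A i c c'‖ ^ 2 := by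
      set M : ℂ := (Aᴴ * A) c c' / q with hM
      have hMw : ∑ i, (pF A i : ℂ) * wF q A i c c' = M := mean_w q A hq hA c c'
      have hMc : ∑ i, (pF A i : ℂ) * (starRingEnd ℂ) (wF q A i c c') = (starRingEnd ℂ) M := by
        have : ∀ i, (pF A i : ℂ) * (starRingEnd ℂ) (wF q A i c c') =
            (starRingEnd ℂ) ((pF A i : ℂ) * wF q A i c c') := by
          intro i; rw [(starRingEnd ℂ).map_mul, Complex.conj_ofReal]
        simp_rw [this]
        rw [← map_sum, hMw]
      have hD : (∑ i, (pF A i : ℂ) * (G c c' i * (starRingEnd ℂ) (G c c' i))) =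
          (∑ i, (pF A i : ℂ) * (wF q A i c c' * (starRingEnd ℂ) (wF q A i c c'))) -
            M * (starRingEnd ℂ) M := by
        have h1 : ∀ i, (pF A i : ℂ) * (G c c' i * (starRingEnd ℂ) (G c c' i)) =
            (pF A i : ℂ) * (wF q A i c c' * (starRingEnd ℂ) (wF q A i c c')) -
              ((pF A i : ℂ) * wF q A i c c') * (starRingEnd ℂ) M -
              M * ((pF A i : ℂ) * (starRingEnd ℂ) (wF q A i c c')) +
              (pF A i : ℂ) * (M * (starRingEnd ℂ) M) := by
          intro i
          simp only [hGdef, ← hM, map_sub]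
          ring
        simp_rw [h1]
        rw [Finset.sum_add_distrib, Finset.sum_sub_distrib, Finset.sum_sub_distrib,
          ← Finset.sum_mul, ← Finset.mul_sum, ← Finset.sum_mul, hMw, hMc, hpC]
        ring
      rw [hD, Complex.sub_re]
      have hnsq : (M * (starRingEnd ℂ) M).re = Complex.normSq M := by
        rw [Complex.mul_conj]; simp
      have h2 : (∑ i, (pF A i : ℂ) * (wF q A i c c' * (starRingEnd ℂ) (wF q A i c c'))).re =
          ∑ i, pF A i * ‖wF q A i c c'‖ ^ 2 := by
        rw [Complex.re_sum]
        refine Finset.sum_congr rfl fun i _ => ?_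
        rw [Complex.mul_conj, ← Complex.ofReal_mul, Complex.ofReal_re, Complex.normSq_eq_norm_sq]
      rw [hnsq, h2]
      linarith [Complex.normSq_nonneg M]
    calc ∑ v : Fin q → Fin m, (∏ t, pF A (v t)) *
        ‖(∑ r, wF q A (v r) c c') - (Aᴴ * A) c c'‖ ^ 2
        = ∑ v : Fin q → Fin m, (∏ t, pF A (v t)) * ‖∑ r, G c c' (v r)‖ ^ 2 := by
          simp_rw [step0]
      _ = ((q : ℂ) * ∑ i, (pF A i : ℂ) * (G c c' i * (starRingEnd ℂ) (G c c' i))).re := by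
          rw [claim1, claim2]
      _ = (q : ℝ) * (∑ i, (pF A i : ℂ) * (G c c' i * (starRingEnd ℂ) (G c c' i))).re := by
          simp [Complex.mul_re]
      _ ≤ (q : ℝ) * ∑ i, pF A i * ‖wF q A i c c'‖ ^ 2 :=
          mul_le_mul_of_nonneg_left claim3 hq0.le
  -- assemble
  have swap1 : ∑ v : Fin q → Fin m, (∏ t, pF A (v t)) *
      (∑ c, ∑ c', ‖(∑ r, wF q A (v r) c c') - (Aᴴ * A) c c'‖ ^ 2) =
      ∑ c, ∑ c', ∑ v : Fin q → Fin m, (∏ t, pF A (v t)) *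
        ‖(∑ r, wF q A (v r) c c') - (Aᴴ * A) c c'‖ ^ 2 := by
    simp_rw [Finset.mul_sum]
    rw [Finset.sum_comm]
    exact Finset.sum_congr rfl fun c _ => Finset.sum_comm
  rw [swap1]
  calc ∑ c, ∑ c', ∑ v : Fin q → Fin m, (∏ t, pF A (v t)) *
        ‖(∑ r, wF q A (v r) c c') - (Aᴴ * A) c c'‖ ^ 2
      ≤ ∑ c, ∑ c', (q : ℝ) * ∑ i, pF A i * ‖wF q A i c c'‖ ^ 2 :=
        Finset.sum_le_sum fun c _ => Finset.sum_le_sum fun c' _ => main c c'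
    _ = ∑ i, ((q : ℝ) * pF A i) * (∑ c, ∑ c', ‖wF q A i c c'‖ ^ 2) := by
        have hsw : ∀ (f : Fin n → Fin n → Fin m → ℝ),
            ∑ c, ∑ c', ∑ i, f c c' i = ∑ i, ∑ c, ∑ c', f c c' i := by
          intro f
          calc ∑ c, ∑ c', ∑ i, f c c' i = ∑ c, ∑ i, ∑ c', f c c' i :=
                Finset.sum_congr rfl fun c _ => Finset.sum_comm
            _ = ∑ i, ∑ c, ∑ c', f c c' i := Finset.sum_comm
        simp_rw [Finset.mul_sum, ← mul_assoc]
        rw [hsw (fun c c' i => (q : ℝ) * pF A i * ‖wF q A i c c'‖ ^ 2)]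
    _ ≤ ∑ i, ((q : ℝ) * pF A i) * ((∑ i', ∑ j, ‖A i' j‖ ^ 2) / q) ^ 2 := by
        refine Finset.sum_le_sum fun i _ => ?_
        by_cases hz : (∑ j, ‖A i j‖ ^ 2) = 0
        · have : pF A i = 0 := by rw [pF, hz, zero_div]
          simp [this]
        · rw [w_norm q A hq hA hz]
    _ = (∑ i', ∑ j, ‖A i' j‖ ^ 2) ^ 2 / q := by
        rw [← Finset.sum_mul, ← Finset.mul_sum, pF_sum A hA, mul_one, div_pow]
        field_simp


end facts

/-- variance bound for the FKV row-sketch. For nonzero `A ∈ ℂ^{m×n}` and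
the random matrix `S ∈ ℂ^{q×n}` whose `q` rows are i.i.d. rescaled ℓ²-sampled rows of
`A`, we have `E[‖S†S − A†A‖_F²] ≤ ‖A‖_F⁴/q`. -/
theorem stmt8 {Ω : Type*} [MeasurableSpace Ω] (μ : Measure Ω) [IsProbabilityMeasure μ]
    (m n q : ℕ) (hq : 1 ≤ q)
    (A : Matrix (Fin m) (Fin n) ℂ) (hA : A ≠ 0)
    (idx : Fin q → Ω → Fin m)
    (hmeas : ∀ r, Measurable (idx r))
    (hindep : iIndepFun idx μ)
    (hdist : ∀ r (i : Fin m),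
      μ (idx r ⁻¹' {i}) = ENNReal.ofReal ((∑ j, ‖A i j‖ ^ 2) / ∑ i', ∑ j, ‖A i' j‖ ^ 2))
    (S : Ω → Matrix (Fin q) (Fin n) ℂ)
    (hS : ∀ ω r c, S ω r c =
      ((Real.sqrt (∑ i', ∑ j, ‖A i' j‖ ^ 2) /
        (Real.sqrt q * Real.sqrt (∑ j, ‖A (idx r ω) j‖ ^ 2)) : ℝ) : ℂ) * A (idx r ω) c) :
    (∫ ω, ∑ c, ∑ c', ‖((S ω)ᴴ * S ω - Aᴴ * A) c c'‖ ^ 2 ∂μ) ≤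
      (∑ i', ∑ j, ‖A i' j‖ ^ 2) ^ 2 / q := by
  classical
  set V : Ω → (Fin q → Fin m) := fun ω r => idx r ω with hV
  have hVmeas : Measurable V := measurable_pi_lambda _ (fun r => hmeas r)
  set H : (Fin q → Fin m) → ℝ :=
    fun v => ∑ c, ∑ c', ‖(∑ r, wF q A (v r) c c') - (Aᴴ * A) c c'‖ ^ 2 with hH
  have hintegrand : ∀ ω, (∑ c, ∑ c', ‖((S ω)ᴴ * S ω - Aᴴ * A) c c'‖ ^ 2) = H (V ω) := by
    intro ω
    rw [hH]
    refine Finset.sum_congr rfl fun c _ => Finset.sum_congr rfl fun c' _ => ?_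
    congr 1
    rw [Matrix.sub_apply, Matrix.mul_apply]
    have hterm : ∀ r, (S ω)ᴴ c r * S ω r c' = wF q A (idx r ω) c c' := by
      intro r
      rw [Matrix.conjTranspose_apply, hS ω r c, hS ω r c']
      rfl
    simp only [hterm]
    rfl
  have hHmeas : Measurable H := measurable_of_countable H
  have key : ∫ ω, H (V ω) ∂μ = ∑ v, (μ.map V {v}).toReal • H v := by
    haveI : IsProbabilityMeasure (μ.map V) := Measure.isProbabilityMeasure_map hVmeas.aemeasurable
    calc ∫ ω, H (V ω) ∂μ = ∫ v, H v ∂(μ.map V) :=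
          (integral_map hVmeas.aemeasurable hHmeas.aestronglyMeasurable).symm
      _ = ∑ v, (μ.map V {v}).toReal • H v := integral_fintype Integrable.of_finite
  have hprob : ∀ v : Fin q → Fin m, (μ.map V {v}).toReal = ∏ t, pF A (v t) := by
    intro v
    rw [Measure.map_apply hVmeas (measurableSet_singleton v)]
    have hpre : V ⁻¹' {v} = ⋂ t ∈ Finset.univ, idx t ⁻¹' {v t} := by
      ext ω
      simp [hV, funext_iff]
    rw [hpre, hindep.measure_inter_preimage_eq_mul Finset.univ
      (fun t _ => measurableSet_singleton _)]
    simp_rw [hdist]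
    rw [ENNReal.toReal_prod]
    exact Finset.prod_congr rfl fun t _ => ENNReal.toReal_ofReal (pF_nonneg A _)
  have : ∫ ω, ∑ c, ∑ c', ‖((S ω)ᴴ * S ω - Aᴴ * A) c c'‖ ^ 2 ∂μ =
      ∑ v : Fin q → Fin m, (∏ t, pF A (v t)) * H v := by
    simp_rw [hintegrand]
    rw [key]
    exact Finset.sum_congr rfl fun v _ => by rw [hprob v, smul_eq_mul]
  rw [this]
  exact det_bound q hq A hA
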